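/- If f ∈ L²(α), g ∈ L²₀(β) (i.e. ∫g dβ = 0), and π is a probability density on X×Y with respect to α⊗β whose marginals are α and β and which is bounded below by a constant C > 0, then ∫∫ (f(x)+g(y))² π(x,y) dα(x)dβ(y) ≥ C(‖f‖²_{L²(α)} + ‖g‖²_{L²(β)}). -/

import Mathlib

open MeasureTheory

/-- If `f ∈ L²(α)`, `g ∈ L²(β)` with `∫ g dβ = 0`, and `π` is a
probability density on `X × Y` w.r.t. `α ⊗ β` whose marginals are `α` and `β`
and which is bounded below by `C > 0`, then
`∫∫ (f x + g y)² π(x,y) dα dβ ≥ C (‖f‖²_{L²(α)} + ‖g‖²_{L²(β)})`. -/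
theorem density_coercivity {X Y : Type*} [MeasurableSpace X] [MeasurableSpace Y]
    (α : Measure X) (β : Measure Y)
    [IsProbabilityMeasure α] [IsProbabilityMeasure β]
    (π : X × Y → ℝ) (hπmeas : Measurable π)
    (C : ℝ) (hC : 0 < C) (hlow : ∀ x y, C ≤ π (x, y))
    (hmarg1 : ∀ᵐ x ∂α, ∫ y, π (x, y) ∂β = 1)
    (hmarg2 : ∀ᵐ y ∂β, ∫ x, π (x, y) ∂α = 1)
    (f : X → ℝ) (g : Y → ℝ)
    (hf : MemLp f 2 α) (hg : MemLp g 2 β)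
    (hg0 : ∫ y, g y ∂β = 0)
    (hintegrable : Integrable (fun z : X × Y => (f z.1 + g z.2) ^ 2 * π z) (α.prod β)) :
    C * ((∫ x, (f x) ^ 2 ∂α) + ∫ y, (g y) ^ 2 ∂β) ≤
      ∫ x, ∫ y, (f x + g y) ^ 2 * π (x, y) ∂β ∂α := by
  have hfsq : Integrable (fun x => f x ^ 2) α := hf.integrable_sq
  have hgsq : Integrable (fun y => g y ^ 2) β := hg.integrable_sq
  have hgint : Integrable g β := hg.integrable one_le_two
  have hinner_int : ∀ᵐ x ∂α, Integrable (fun y => (f x + g y) ^ 2 * π (x, y)) β :=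
    hintegrable.prod_right_ae
  have hlb_int : ∀ x : X, Integrable (fun y => (f x + g y) ^ 2) β := by
    intro x
    have h : (fun y => (f x + g y) ^ 2) = fun y => (f x ^ 2 + 2 * f x * g y) + g y ^ 2 := by
      funext y; ring
    rw [h]
    exact ((integrable_const _).add (hgint.const_mul _)).add hgsq
  have hinner_val : ∀ x : X, ∫ y, (f x + g y) ^ 2 ∂β = f x ^ 2 + ∫ y, g y ^ 2 ∂β := by
    intro x
    have h1 : (fun y => (f x + g y) ^ 2) = fun y => (f x ^ 2 + 2 * f x * g y) + g y ^ 2 := by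
      funext y; ring
    have e1 : ∫ y, ((f x ^ 2 + 2 * f x * g y) + g y ^ 2) ∂β
        = (∫ y, (f x ^ 2 + 2 * f x * g y) ∂β) + ∫ y, g y ^ 2 ∂β :=
      integral_add ((integrable_const _).add (hgint.const_mul _)) hgsq
    have e2 : ∫ y, (f x ^ 2 + 2 * f x * g y) ∂β
        = (∫ _, (f x ^ 2) ∂β) + ∫ y, 2 * f x * g y ∂β :=
      integral_add (integrable_const _) (hgint.const_mul _)
    rw [h1, e1, e2, integral_const, integral_const_mul, hg0]
    simp
  have key : ∀ᵐ x ∂α, C * (f x ^ 2 + ∫ y, g y ^ 2 ∂β) ≤ ∫ y, (f x + g y) ^ 2 * π (x, y) ∂β := by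
    filter_upwards [hinner_int] with x hx
    have h : C * (f x ^ 2 + ∫ y, g y ^ 2 ∂β) = ∫ y, C * (f x + g y) ^ 2 ∂β := by
      rw [integral_const_mul, hinner_val x]
    rw [h]
    refine integral_mono ((hlb_int x).const_mul _) hx ?_
    intro y
    show C * (f x + g y) ^ 2 ≤ (f x + g y) ^ 2 * π (x, y)
    rw [mul_comm]
    exact mul_le_mul_of_nonneg_left (hlow x y) (sq_nonneg _)
  calc C * ((∫ x, f x ^ 2 ∂α) + ∫ y, g y ^ 2 ∂β)
      = ∫ x, C * (f x ^ 2 + ∫ y, g y ^ 2 ∂β) ∂α := by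
        rw [integral_const_mul, integral_add hfsq (integrable_const _), integral_const]
        simp
    _ ≤ ∫ x, ∫ y, (f x + g y) ^ 2 * π (x, y) ∂β ∂α := by
        refine integral_mono_ae ((hfsq.add (integrable_const _)).const_mul _) ?_ key
        exact hintegrable.integral_prod_left
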